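/- arXiv:2305.17057 — 2 statements merged into one kernel-verified Lean document; each statement's English description precedes it below -/
import Mathlib

section
/- Let h be a positive harmonic function on the upper half-plane H = {(x,y) : y > 0}, continuous up to the boundary, admitting a Herglotz representation h(x,y) = A y + (y/π) ∫_ℝ h(t,0)/((x-t)² + y²) dt with A ≥ 0 and ∫_ℝ h(t,0)/(t²+1) dt < ∞. If the boundary trace t ↦ h(t,0) is nondecreasing in |t|, then there exists a constant C > 0 such that h(x,y) ≤ C·(x² + y² + 1)^{1/2} for all (x,y) in H. -/
open MeasureTheory Real Filter

lemma aux_integrable (x y : ℝ) (hy : 0 < y) :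
    Integrable (fun t : ℝ => ((x - t) ^ 2 + y ^ 2)⁻¹) := by
  have g2 : Integrable fun t : ℝ => (1 + (t * y⁻¹) ^ 2)⁻¹ :=
    integrable_inv_one_add_sq.comp_mul_right' (inv_ne_zero hy.ne')
  have g3 : Integrable fun t : ℝ => (t ^ 2 + y ^ 2)⁻¹ := by
    have := g2.const_mul ((y ^ 2)⁻¹)
    refine this.congr ?_
    filter_upwards with t
    have hy2 : (y:ℝ) ^ 2 ≠ 0 := by positivity
    field_simp
    ring
  have := g3.comp_sub_left x
  exact this

lemma aux_integral (x y : ℝ) (hy : 0 < y) :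
    (∫ t : ℝ, ((x - t) ^ 2 + y ^ 2)⁻¹) = π / y := by
  have h1 : (∫ t : ℝ, ((x - t) ^ 2 + y ^ 2)⁻¹)
      = ∫ t : ℝ, (t ^ 2 + y ^ 2)⁻¹ := by
    have := MeasureTheory.integral_sub_left_eq_self (fun s : ℝ => (s ^ 2 + y ^ 2)⁻¹)
      (μ := volume) x
    exact this
  rw [h1]
  have h2 : ∀ t : ℝ, (t ^ 2 + y ^ 2)⁻¹ = (y ^ 2)⁻¹ * (1 + (t * y⁻¹) ^ 2)⁻¹ := by
    intro t
    have hy2 : (y:ℝ) ^ 2 ≠ 0 := by positivity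
    field_simp
    ring
  simp_rw [h2]
  rw [integral_const_mul, MeasureTheory.Measure.integral_comp_inv_mul_right (fun u : ℝ => (1 + u ^ 2)⁻¹) y,
    integral_univ_inv_one_add_sq, smul_eq_mul, abs_of_pos hy]
  field_simp

/-- A positive harmonic function on the upper half-plane, continuous up to the
boundary, with a Herglotz representation whose boundary trace is nondecreasing in `|t|`,
grows at most linearly: `h(x,y) ≤ C·(x² + y² + 1)^{1/2}`. -/
theorem herglotz_monotone_boundary_linear_growth
    (h : ℝ → ℝ → ℝ) (A : ℝ)
    (hpos : ∀ x y : ℝ, 0 < y → 0 < h x y)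
    (hharm : ∀ x y : ℝ, 0 < y →
      deriv (fun s => deriv (fun u => h u y) s) x
        + deriv (fun s => deriv (fun v => h x v) s) y = 0)
    (hcont : ContinuousOn (fun p : ℝ × ℝ => h p.1 p.2) {p : ℝ × ℝ | 0 ≤ p.2})
    (hA : 0 ≤ A)
    (hint : Integrable (fun t : ℝ => h t 0 / (t ^ 2 + 1)))
    (hrep : ∀ x y : ℝ, 0 < y →
      h x y = A * y + (y / π) * ∫ t : ℝ, h t 0 / ((x - t) ^ 2 + y ^ 2))
    (hmono : ∀ s t : ℝ, |s| ≤ |t| → h s 0 ≤ h t 0) :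
    ∃ C : ℝ, 0 < C ∧ ∀ x y : ℝ, 0 < y →
      h x y ≤ C * Real.sqrt (x ^ 2 + y ^ 2 + 1) := by
  -- boundary trace is nonnegative
  have hb0 : ∀ t : ℝ, 0 ≤ h t 0 := by
    intro t
    have hmem : ((t, 0) : ℝ × ℝ) ∈ {p : ℝ × ℝ | 0 ≤ p.2} := by simp
    have l0 : Tendsto (fun y : ℝ => ((t, y) : ℝ × ℝ)) (nhdsWithin 0 (Set.Ioi 0))
        (nhdsWithin ((t, 0) : ℝ × ℝ) {p : ℝ × ℝ | 0 ≤ p.2}) := by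
      apply tendsto_nhdsWithin_of_tendsto_nhds_of_eventually_within
      · exact ((Continuous.tendsto (by continuity) 0)).mono_left nhdsWithin_le_nhds
      · filter_upwards [self_mem_nhdsWithin] with y hy
        exact le_of_lt hy
    have key : Tendsto (fun y : ℝ => h t y) (nhdsWithin 0 (Set.Ioi 0)) (nhds (h t 0)) :=
      ((hcont (t, 0) hmem).tendsto).comp l0
    exact ge_of_tendsto key (by
      filter_upwards [self_mem_nhdsWithin] with y hy
      exact (hpos t y hy).le)
  set I : ℝ := ∫ t : ℝ, h t 0 / (t ^ 2 + 1) with hIdef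
  have hI0 : 0 ≤ I :=
    integral_nonneg fun t => div_nonneg (hb0 t) (by positivity)
  -- linear growth of the boundary trace
  have hlin : ∀ r : ℝ, 1 ≤ r → h r 0 ≤ 5 * I * r := by
    intro r hr
    have hrpos : (0:ℝ) < r := by linarith
    have h1 : (∫ t in Set.Icc r (2 * r), h t 0 / (t ^ 2 + 1)) ≤ I :=
      setIntegral_le_integral hint (ae_of_all _ fun t => div_nonneg (hb0 t) (by positivity))
    have h2 : (h r 0 / (4 * r ^ 2 + 1)) * (volume (Set.Icc r (2 * r))).toReal
        ≤ ∫ t in Set.Icc r (2 * r), h t 0 / (t ^ 2 + 1) := by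
      apply setIntegral_ge_of_const_le_real measurableSet_Icc
        (measure_Icc_lt_top).ne
      · intro t ht
        have ht1 : r ≤ t := ht.1
        have ht2 : t ≤ 2 * r := ht.2
        have hbt : h r 0 ≤ h t 0 := by
          apply hmono
          rw [abs_of_pos hrpos, abs_of_pos (by linarith : (0:ℝ) < t)]
          exact ht1
        exact div_le_div₀ (hb0 t) hbt (by positivity) (by nlinarith)
      · exact hint.integrableOn
    have hvol : (volume (Set.Icc r (2 * r))).toReal = r := by
      rw [Real.volume_Icc, ENNReal.toReal_ofReal (by linarith)]
      ring
    rw [hvol] at h2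
    have h3 : h r 0 * r ≤ I * (4 * r ^ 2 + 1) := by
      rw [div_mul_eq_mul_div, div_le_iff₀ (by positivity)] at h2
      linarith [h2.trans (mul_le_mul_of_nonneg_right h1 (le_of_lt (by positivity : (0:ℝ) < 4 * r ^ 2 + 1)))]
    nlinarith [h3, hrpos, mul_nonneg hI0 (show (0:ℝ) ≤ r ^ 2 - 1 by nlinarith), hb0 r]
  have hlin' : ∀ s r : ℝ, 1 ≤ r → |s| ≤ r → h s 0 ≤ 5 * I * r := by
    intro s r hr hsr
    have : h s 0 ≤ h r 0 := hmono s r (by rw [abs_of_pos (show (0:ℝ) < r from by linarith)]; exact hsr)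
    exact this.trans (hlin r hr)
  refine ⟨A + 20 * I + 1, by linarith, ?_⟩
  intro x y hy
  set ρ : ℝ := Real.sqrt (x ^ 2 + y ^ 2 + 1) with hρdef
  have hρsq : ρ ^ 2 = x ^ 2 + y ^ 2 + 1 := Real.sq_sqrt (by positivity)
  have hρ1 : 1 ≤ ρ := by
    rw [show (1:ℝ) = Real.sqrt 1 by simp [Real.sqrt_one]]
    exact Real.sqrt_le_sqrt (by nlinarith [sq_nonneg x, sq_nonneg y])
  have hxρ : |x| ≤ ρ := by
    rw [← Real.sqrt_sq_eq_abs]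
    exact Real.sqrt_le_sqrt (by nlinarith [sq_nonneg y])
  have hyρ : y ≤ ρ := by
    rw [← Real.sqrt_sq hy.le]
    exact Real.sqrt_le_sqrt (by nlinarith [sq_nonneg x])
  -- pointwise kernel bound
  have key : ∀ t : ℝ, h t 0 / ((x - t) ^ 2 + y ^ 2)
      ≤ (10 * I * ρ) * ((x - t) ^ 2 + y ^ 2)⁻¹ + 5 * (h t 0 / (t ^ 2 + 1)) := by
    intro t
    have hden : (0:ℝ) < (x - t) ^ 2 + y ^ 2 := by positivity
    rcases le_or_gt ((t - x) ^ 2) (ρ ^ 2) with hc | hc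
    · have htx : |t - x| ≤ ρ := by
        rw [← Real.sqrt_sq_eq_abs, ← Real.sqrt_sq (by linarith : (0:ℝ) ≤ ρ)]
        exact Real.sqrt_le_sqrt hc
      have ht2ρ : |t| ≤ 2 * ρ := by
        calc |t| = |(t - x) + x| := by ring_nf
        _ ≤ |t - x| + |x| := abs_add_le _ _
        _ ≤ ρ + ρ := add_le_add htx hxρ
        _ = 2 * ρ := by ring
      have hbt : h t 0 ≤ 10 * I * ρ := by
        have := hlin' t (2 * ρ) (by linarith) ht2ρ
        linarith
      have t2 : (0:ℝ) ≤ 5 * (h t 0 / (t ^ 2 + 1)) :=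
        mul_nonneg (by norm_num) (div_nonneg (hb0 t) (by positivity))
      rw [div_eq_mul_inv]
      have := mul_le_mul_of_nonneg_right hbt (le_of_lt (inv_pos.mpr hden))
      linarith
    · have hkb : ((x - t) ^ 2 + y ^ 2)⁻¹ ≤ 5 / (t ^ 2 + 1) := by
        rw [inv_eq_one_div, div_le_div_iff₀ hden (by positivity)]
        nlinarith [sq_nonneg (t - 2 * x), sq_nonneg y]
      have t1 : (0:ℝ) ≤ (10 * I * ρ) * ((x - t) ^ 2 + y ^ 2)⁻¹ :=
        mul_nonneg (mul_nonneg (mul_nonneg (by norm_num) hI0) (by linarith)) (inv_nonneg.mpr hden.le)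
      rw [div_eq_mul_inv]
      have := mul_le_mul_of_nonneg_left hkb (hb0 t)
      rw [mul_div_assoc'] at this
      calc h t 0 * ((x - t) ^ 2 + y ^ 2)⁻¹ ≤ h t 0 * 5 / (t ^ 2 + 1) := this
        _ = 5 * (h t 0 / (t ^ 2 + 1)) := by ring
        _ ≤ _ := by linarith
  have hmaj : Integrable (fun t : ℝ =>
      (10 * I * ρ) * ((x - t) ^ 2 + y ^ 2)⁻¹ + 5 * (h t 0 / (t ^ 2 + 1))) :=
    ((aux_integrable x y hy).const_mul _).add (hint.const_mul 5)
  have hII : (∫ t : ℝ, h t 0 / ((x - t) ^ 2 + y ^ 2))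
      ≤ (10 * I * ρ) * (π / y) + 5 * I := by
    have hmono' := integral_mono_of_nonneg
      (f := fun t : ℝ => h t 0 / ((x - t) ^ 2 + y ^ 2)) (g := fun t : ℝ =>
        (10 * I * ρ) * ((x - t) ^ 2 + y ^ 2)⁻¹ + 5 * (h t 0 / (t ^ 2 + 1)))
      (ae_of_all _ fun t => div_nonneg (hb0 t) (by positivity))
      hmaj (ae_of_all _ key)
    calc (∫ t : ℝ, h t 0 / ((x - t) ^ 2 + y ^ 2)) ≤ _ := hmono'
      _ = (10 * I * ρ) * (π / y) + 5 * I := by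
        rw [integral_add ((aux_integrable x y hy).const_mul _) (hint.const_mul 5),
          integral_const_mul, integral_const_mul, aux_integral x y hy]
  have hπ : (0:ℝ) < π := Real.pi_pos
  have hrw : h x y = A * y + (y / π) * ∫ t : ℝ, h t 0 / ((x - t) ^ 2 + y ^ 2) := hrep x y hy
  have hstep : h x y ≤ A * y + (y / π) * ((10 * I * ρ) * (π / y) + 5 * I) := by
    rw [hrw]
    have := mul_le_mul_of_nonneg_left hII (le_of_lt (div_pos hy hπ))
    linarith
  have hcomp : (y / π) * ((10 * I * ρ) * (π / y) + 5 * I) = 10 * I * ρ + 5 * I * y / π := by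
    field_simp
  rw [hcomp] at hstep
  have hdiv : 5 * I * y / π ≤ 2 * I * ρ := by
    rw [div_le_iff₀ hπ]
    nlinarith [Real.pi_gt_three, mul_nonneg hI0 hy.le, mul_nonneg hI0 (by linarith : (0:ℝ) ≤ ρ)]
  have : h x y ≤ A * y + 10 * I * ρ + 2 * I * ρ := by linarith
  calc h x y ≤ A * y + 10 * I * ρ + 2 * I * ρ := this
    _ ≤ (A + 20 * I + 1) * ρ := by nlinarith [mul_le_mul_of_nonneg_left hyρ hA, mul_nonneg hI0 (by linarith : (0:ℝ) ≤ ρ)]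
end

section
/- There exists a constant C > 0 such that for all x ∈ ℝ and y > 0, y · ∫_ℝ (1 + √|t|)/((x-t)² + y²) dt ≤ C·(1 + √|x| + √y). -/
open MeasureTheory Real

private lemma sqrt_abs_div_one_add_sq_integrable :
    Integrable (fun s : ℝ => Real.sqrt |s| / (s ^ 2 + 1)) := by
  have hφ : Integrable (fun s : ℝ => (1 + ‖s‖ ^ 2) ^ (-(3/2 : ℝ) / 2)) :=
    integrable_rpow_neg_one_add_norm_sq (E := ℝ) (by norm_num)
  refine hφ.mono ?_ (Filter.Eventually.of_forall fun s => ?_)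
  · apply Continuous.aestronglyMeasurable
    exact (continuous_abs.sqrt).div (by continuity) (fun s => by positivity)
  · have h1 : (0:ℝ) < 1 + s ^ 2 := by positivity
    rw [Real.norm_eq_abs, Real.norm_eq_abs, Real.norm_eq_abs, sq_abs,
      abs_of_nonneg (by positivity : (0:ℝ) ≤ Real.sqrt |s| / (s ^ 2 + 1)),
      abs_of_nonneg (Real.rpow_nonneg h1.le _)]
    have hb : Real.sqrt |s| ≤ (1 + s ^ 2) ^ ((1:ℝ)/4) := by
      have h2 : |s| ≤ (1 + s ^ 2) ^ ((1:ℝ)/2) := by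
        rw [← Real.sqrt_eq_rpow]
        calc |s| = Real.sqrt (s ^ 2) := (Real.sqrt_sq_eq_abs s).symm
          _ ≤ Real.sqrt (1 + s ^ 2) := Real.sqrt_le_sqrt (by linarith)
      calc Real.sqrt |s| = |s| ^ ((1:ℝ)/2) := Real.sqrt_eq_rpow _
        _ ≤ ((1 + s ^ 2) ^ ((1:ℝ)/2)) ^ ((1:ℝ)/2) :=
            Real.rpow_le_rpow (abs_nonneg s) h2 (by norm_num)
        _ = (1 + s ^ 2) ^ ((1:ℝ)/4) := by
            rw [← Real.rpow_mul h1.le]; norm_num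
    calc Real.sqrt |s| / (s ^ 2 + 1) ≤ (1 + s ^ 2) ^ ((1:ℝ)/4) / (1 + s ^ 2) := by
          rw [add_comm (s ^ 2) 1]
          gcongr
      _ = (1 + s ^ 2) ^ (-(3/2 : ℝ) / 2) := by
          rw [div_eq_mul_inv, ← Real.rpow_neg_one (1 + s ^ 2), ← Real.rpow_add h1]
          norm_num

/-- there is `C > 0` with
`y · ∫_ℝ (1 + √|t|)/((x-t)² + y²) dt ≤ C·(1 + √|x| + √y)` for all `x ∈ ℝ`, `y > 0`. -/
theorem halfplane_sqrt_boundary_integral_bound :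
    ∃ C : ℝ, 0 < C ∧ ∀ x y : ℝ, 0 < y →
      y * ∫ t : ℝ, (1 + Real.sqrt |t|) / ((x - t) ^ 2 + y ^ 2)
        ≤ C * (1 + Real.sqrt |x| + Real.sqrt y) := by
  set g : ℝ → ℝ := fun s => Real.sqrt |s| / (s ^ 2 + 1) with hg
  set I : ℝ := ∫ s : ℝ, g s with hIdef
  have hI : 0 ≤ I := integral_nonneg fun s => by positivity
  refine ⟨π + I + 1, by positivity, fun x y hy => ?_⟩
  have hy0 : y ≠ 0 := hy.ne'
  have hsy : (0:ℝ) < Real.sqrt y := Real.sqrt_pos.mpr hy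
  have hsq : ∀ t : ℝ, (x - t) ^ 2 = (t - x) ^ 2 := fun t => by ring
  -- base integrable functions
  have ib1 : Integrable (fun u : ℝ => 1 / (u ^ 2 + y ^ 2)) := by
    have b := integrable_inv_one_add_sq.comp_div hy0
    have := b.const_mul (1 / y ^ 2)
    refine this.congr (Filter.Eventually.of_forall fun u => ?_)
    field_simp
    ring
  have ib2 : Integrable (fun u : ℝ => Real.sqrt |u| / (u ^ 2 + y ^ 2)) := by
    have b := sqrt_abs_div_one_add_sq_integrable.comp_div hy0
    have := b.const_mul (1 / (y * Real.sqrt y))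
    refine this.congr (Filter.Eventually.of_forall fun u => ?_)
    have h1 : |u / y| = |u| / y := by rw [abs_div, abs_of_pos hy]
    have h2 : Real.sqrt (|u| / y) = Real.sqrt |u| / Real.sqrt y :=
      by rw [Real.sqrt_div (abs_nonneg u)]
    simp only [h1, h2]
    have hsys : Real.sqrt y * Real.sqrt y = y := Real.mul_self_sqrt hy.le
    field_simp
    rw [Real.sq_sqrt hy.le]
  -- integral values
  have I1 : ∫ u : ℝ, 1 / (u ^ 2 + y ^ 2) = π / y := by
    have e : ∀ u : ℝ, 1 / (u ^ 2 + y ^ 2) = (1 / y ^ 2) * (1 + (u / y) ^ 2)⁻¹ := by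
      intro u; field_simp; ring
    simp_rw [e]
    rw [integral_const_mul, Measure.integral_comp_div (fun s : ℝ => (1 + s ^ 2)⁻¹) y,
      integral_univ_inv_one_add_sq, smul_eq_mul, abs_of_pos hy]
    field_simp
  have I2 : ∫ u : ℝ, Real.sqrt |u| / (u ^ 2 + y ^ 2) = I / Real.sqrt y := by
    have e : ∀ u : ℝ, Real.sqrt |u| / (u ^ 2 + y ^ 2) = (1 / (y * Real.sqrt y)) * g (u / y) := by
      intro u
      have h1 : |u / y| = |u| / y := by rw [abs_div, abs_of_pos hy]
      have h2 : Real.sqrt (|u| / y) = Real.sqrt |u| / Real.sqrt y := by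
        rw [Real.sqrt_div (abs_nonneg u)]
      have hsys : Real.sqrt y * Real.sqrt y = y := Real.mul_self_sqrt hy.le
      simp only [hg, h1, h2]
      field_simp
      rw [Real.sq_sqrt hy.le]
    simp_rw [e]
    rw [integral_const_mul, Measure.integral_comp_div g y, smul_eq_mul, abs_of_pos hy,
      ← hIdef]
    have hsys : Real.sqrt y * Real.sqrt y = y := Real.mul_self_sqrt hy.le
    field_simp
  -- dominating function
  set h : ℝ → ℝ := fun t =>
    (1 + Real.sqrt |x|) * (1 / ((t - x) ^ 2 + y ^ 2)) +
      Real.sqrt |t - x| / ((t - x) ^ 2 + y ^ 2) with hh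
  have ih1 : Integrable (fun t : ℝ => 1 / ((t - x) ^ 2 + y ^ 2)) := ib1.comp_sub_right x
  have ih2 : Integrable (fun t : ℝ => Real.sqrt |t - x| / ((t - x) ^ 2 + y ^ 2)) :=
    ib2.comp_sub_right x
  have ih : Integrable h := (ih1.const_mul _).add ih2
  have hmono : (∫ t : ℝ, (1 + Real.sqrt |t|) / ((x - t) ^ 2 + y ^ 2)) ≤ ∫ t : ℝ, h t := by
    refine integral_mono_of_nonneg (Filter.Eventually.of_forall fun t => by positivity) ih
      (Filter.Eventually.of_forall fun t => ?_)
    have hd : (0:ℝ) < (t - x) ^ 2 + y ^ 2 := by positivity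
    show (1 + Real.sqrt |t|) / ((x - t) ^ 2 + y ^ 2) ≤ h t
    rw [hsq t]
    have hst : Real.sqrt |t| ≤ Real.sqrt |x| + Real.sqrt |t - x| := by
      have habs : |t| ≤ |x| + |t - x| := by
        calc |t| = |x + (t - x)| := by ring_nf
          _ ≤ |x| + |t - x| := abs_add_le _ _
      calc Real.sqrt |t| ≤ Real.sqrt (|x| + |t - x|) := Real.sqrt_le_sqrt habs
        _ ≤ Real.sqrt |x| + Real.sqrt |t - x| := by
            have h1 := Real.sqrt_nonneg |x|
            have h2 := Real.sqrt_nonneg |t - x|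
            have e1 := Real.sq_sqrt (abs_nonneg x)
            have e2 := Real.sq_sqrt (abs_nonneg (t - x))
            calc Real.sqrt (|x| + |t - x|)
                ≤ Real.sqrt ((Real.sqrt |x| + Real.sqrt |t - x|) ^ 2) :=
                  Real.sqrt_le_sqrt (by nlinarith)
              _ = Real.sqrt |x| + Real.sqrt |t - x| := Real.sqrt_sq (by positivity)
    simp only [hh]
    rw [mul_one_div, ← add_div]
    exact (div_le_div_iff_of_pos_right hd).mpr (by linarith)
  have hIeq : ∫ t : ℝ, h t = (1 + Real.sqrt |x|) * (π / y) + I / Real.sqrt y := by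
    simp only [hh]
    rw [integral_add (ih1.const_mul _) ih2, integral_const_mul]
    congr 1
    · rw [integral_sub_right_eq_self (fun u : ℝ => 1 / (u ^ 2 + y ^ 2)) x, I1]
    · rw [integral_sub_right_eq_self (fun u : ℝ => Real.sqrt |u| / (u ^ 2 + y ^ 2)) x, I2]
  have step1 : y * ∫ t : ℝ, (1 + Real.sqrt |t|) / ((x - t) ^ 2 + y ^ 2)
      ≤ y * ((1 + Real.sqrt |x|) * (π / y) + I / Real.sqrt y) := by
    rw [← hIeq]
    exact mul_le_mul_of_nonneg_left hmono hy.le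
  have step2 : y * ((1 + Real.sqrt |x|) * (π / y) + I / Real.sqrt y)
      = π * (1 + Real.sqrt |x|) + I * Real.sqrt y := by
    have e1 : y * ((1 + Real.sqrt |x|) * (π / y)) = π * (1 + Real.sqrt |x|) := by
      field_simp
    have e2 : y * (I / Real.sqrt y) = I * Real.sqrt y := by
      rw [div_eq_mul_inv, mul_left_comm, ← div_eq_mul_inv, Real.div_sqrt]
    rw [mul_add, e1, e2]
  rw [step2] at step1
  refine step1.trans ?_
  have hx0 := Real.sqrt_nonneg |x|
  nlinarith [pi_pos, hsy, hI, mul_nonneg hI hsy.le]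
end
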